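/- Let (χ, η) ∈ ℝ² and let w ∈ ℍ satisfy f′_{(χ,η)}(w) = 0. Then e^{C(w)} ≠ e^{C(w̄)} (so χ_L(w) and η_L(w) are well defined), and χ = χ_L(w) and η = η_L(w). -/

import Mathlib

open MeasureTheory Complex Filter Set

noncomputable section

/-- The support of a measure on `ℝ`. -/
def msupport (μ : Measure ℝ) : Set ℝ := {x | ∀ U ∈ nhds x, μ U ≠ 0}

/-- The Cauchy transform `C(w) = ∫ (w - x)⁻¹ dμ(x)`. -/
def cauchy (μ : Measure ℝ) (w : ℂ) : ℂ := ∫ x, (w - (x : ℂ))⁻¹ ∂μ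

/-- `f′_{(χ,η)}(w) = C(w) + Log (w - χ) - Log (w - χ - η + 1)`. -/
def fprime (μ : Measure ℝ) (χ η : ℝ) (w : ℂ) : ℂ :=
  cauchy μ w + Complex.log (w - (χ : ℂ)) - Complex.log (w - (χ : ℂ) - (η : ℂ) + 1)

/-- `χ_L(w) = w + (w - w̄)(e^{C(w̄)} - 1)/(e^{C(w)} - e^{C(w̄)})`. -/
def chiL (μ : Measure ℝ) (w : ℂ) : ℂ :=
  w + (w - (starRingEnd ℂ) w) * (Complex.exp (cauchy μ ((starRingEnd ℂ) w)) - 1) /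
    (Complex.exp (cauchy μ w) - Complex.exp (cauchy μ ((starRingEnd ℂ) w)))

/-- `η_L(w) = 1 + (w - w̄)(e^{C(w)} - 1)(e^{C(w̄)} - 1)/(e^{C(w)} - e^{C(w̄)})`. -/
def etaL (μ : Measure ℝ) (w : ℂ) : ℂ :=
  1 + (w - (starRingEnd ℂ) w) * (Complex.exp (cauchy μ w) - 1) *
      (Complex.exp (cauchy μ ((starRingEnd ℂ) w)) - 1) /
    (Complex.exp (cauchy μ w) - Complex.exp (cauchy μ ((starRingEnd ℂ) w)))

/-- If `w ∈ ℍ` is a root of `f′_{(χ,η)}`, then `e^{C(w)} ≠ e^{C(w̄)}` and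
`χ = χ_L(w)`, `η = η_L(w)`. -/
theorem fprime_root_eq_chiL_etaL (μ : Measure ℝ) (a b : ℝ) [IsProbabilityMeasure μ]
    (hle : μ ≤ volume) (hsupp : msupport μ ⊆ Set.Icc a b)
    (ha : a ∈ msupport μ) (hb : b ∈ msupport μ) (hab : 1 < b - a)
    (χ η : ℝ) (w : ℂ) (hw : 0 < w.im) (hroot : fprime μ χ η w = 0) :
    Complex.exp (cauchy μ w) ≠ Complex.exp (cauchy μ ((starRingEnd ℂ) w)) ∧
    (χ : ℂ) = chiL μ w ∧ (η : ℂ) = etaL μ w := by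
  have hA : w - (χ : ℂ) ≠ 0 := by
    intro h
    have h2 := congrArg Complex.im h
    simp at h2; linarith
  have hB : w - (χ : ℂ) - (η : ℂ) + 1 ≠ 0 := by
    intro h
    have h2 := congrArg Complex.im h
    simp at h2; linarith
  have hcA : (starRingEnd ℂ) w - (χ : ℂ) ≠ 0 := by
    intro h
    have h2 := congrArg Complex.im h
    simp at h2; linarith
  have hcw : (starRingEnd ℂ) w - w ≠ 0 := by
    intro h
    have h2 := congrArg Complex.im h
    simp at h2; linarith
  -- nonvanishing of w - x for real x
  have hwx : ∀ x : ℝ, w - (x : ℂ) ≠ 0 := by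
    intro x h
    have h2 := congrArg Complex.im h
    simp at h2; linarith
  -- integrability
  have hcont : Continuous fun x : ℝ => (w - (x : ℂ))⁻¹ := by
    apply Continuous.inv₀ (by continuity) hwx
  have hbound : ∀ x : ℝ, ‖(w - (x : ℂ))⁻¹‖ ≤ (w.im)⁻¹ := by
    intro x
    rw [norm_inv]
    apply inv_anti₀ hw
    calc w.im = |(w - (x : ℂ)).im| := by simp [abs_of_pos hw]
      _ ≤ ‖w - (x : ℂ)‖ := Complex.abs_im_le_norm _
      _ = ‖w - (x : ℂ)‖ := rfl
  have hint : Integrable (fun x : ℝ => (w - (x : ℂ))⁻¹) μ :=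
    Integrable.mono' (integrable_const (w.im)⁻¹) hcont.aestronglyMeasurable
      (Eventually.of_forall hbound)
  -- Im of the Cauchy transform is negative
  have himeq : ∀ x : ℝ, ((w - (x : ℂ))⁻¹).im = -(w.im / Complex.normSq (w - (x : ℂ))) := by
    intro x
    rw [Complex.inv_im]
    simp [neg_div]
  have him : (cauchy μ w).im < 0 := by
    have hinteq : ∫ x, ((w - (x : ℂ))⁻¹).im ∂μ = (∫ x, (w - (x : ℂ))⁻¹ ∂μ).im :=
      integral_im hint
    rw [cauchy, ← hinteq]
    have heq2 : ∫ x, ((w - (x : ℂ))⁻¹).im ∂μ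
        = -∫ x, w.im / Complex.normSq (w - (x : ℂ)) ∂μ := by
      rw [← integral_neg]
      exact integral_congr_ae (Eventually.of_forall fun x => himeq x)
    rw [heq2, neg_lt, neg_zero]
    rw [integral_pos_iff_support_of_nonneg]
    · have hsup : Function.support (fun x : ℝ => w.im / Complex.normSq (w - (x : ℂ)))
          = Set.univ := by
        ext x
        simp only [Function.mem_support, Set.mem_univ, iff_true]
        exact (div_pos hw (Complex.normSq_pos.mpr (hwx x))).ne'
      rw [hsup]
      simp
    · intro x
      exact (div_pos hw (Complex.normSq_pos.mpr (hwx x))).le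
    · apply Integrable.mono' (integrable_const (w.im)⁻¹)
      · apply Continuous.aestronglyMeasurable
        exact continuous_const.div (by continuity) fun x => (Complex.normSq_pos.mpr (hwx x)).ne'
      · refine Eventually.of_forall fun x => ?_
        rw [Real.norm_eq_abs,
          _root_.abs_of_nonneg (div_pos hw (Complex.normSq_pos.mpr (hwx x))).le,
          div_le_iff₀ (Complex.normSq_pos.mpr (hwx x)), inv_mul_eq_div, le_div_iff₀ hw]
        calc w.im * w.im = |(w - (x:ℂ)).im| ^ 2 := by simp [abs_of_pos hw]; ring
          _ ≤ ‖w - (x:ℂ)‖ ^ 2 := by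
              apply pow_le_pow_left₀ (abs_nonneg _) (Complex.abs_im_le_norm _)
          _ = Complex.normSq (w - (x:ℂ)) := Complex.sq_norm _
  -- the exponentiated root equation
  rw [fprime] at hroot
  have hc : cauchy μ w
      = Complex.log (w - (χ : ℂ) - (η : ℂ) + 1) - Complex.log (w - (χ : ℂ)) := by
    linear_combination hroot
  have hu : Complex.exp (cauchy μ w) = (w - (χ : ℂ) - (η : ℂ) + 1) / (w - (χ : ℂ)) := by
    rw [hc, Complex.exp_sub, Complex.exp_log hB, Complex.exp_log hA]
  have hconj : cauchy μ ((starRingEnd ℂ) w) = (starRingEnd ℂ) (cauchy μ w) := by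
    rw [cauchy, cauchy, ← integral_conj]
    refine integral_congr_ae (Eventually.of_forall fun x => ?_)
    simp only []
    rw [map_inv₀, map_sub, Complex.conj_ofReal]
  have hv : Complex.exp (cauchy μ ((starRingEnd ℂ) w))
      = ((starRingEnd ℂ) w - (χ : ℂ) - (η : ℂ) + 1) / ((starRingEnd ℂ) w - (χ : ℂ)) := by
    rw [hconj, Complex.exp_conj, hu, map_div₀, map_add, map_sub, map_sub,
      Complex.conj_ofReal, Complex.conj_ofReal, map_one]
  -- η ≠ 1
  have hs : (1 : ℂ) - (η : ℂ) ≠ 0 := by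
    intro h
    have hη : (η : ℂ) = 1 := by linear_combination -h
    rw [hη] at hc
    have htriv : w - (χ : ℂ) - 1 + 1 = w - (χ : ℂ) := by ring
    rw [htriv, sub_self] at hc
    rw [hc] at him
    simp at him
  -- the difference of exponentials
  have hdiff : Complex.exp (cauchy μ w) - Complex.exp (cauchy μ ((starRingEnd ℂ) w))
      = (1 - (η : ℂ)) * ((starRingEnd ℂ) w - w)
        / ((w - (χ : ℂ)) * ((starRingEnd ℂ) w - (χ : ℂ))) := by
    rw [hu, hv]
    field_simp
    ring
  have hne : Complex.exp (cauchy μ w) ≠ Complex.exp (cauchy μ ((starRingEnd ℂ) w)) := by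
    rw [← sub_ne_zero, hdiff]
    exact div_ne_zero (mul_ne_zero hs hcw) (mul_ne_zero hA hcA)
  refine ⟨hne, ?_, ?_⟩
  · rw [chiL, hdiff, hv]
    field_simp
    ring
  · rw [etaL, hdiff, hu, hv]
    field_simp
    ring
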